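/- Let n₁, n₂, m₁, m₂, d₁, d₂ be positive reals and define, for r_a, r_b > 0, α(r_a, r_b) = r_a² n₁ − 2 d₁ r_a r_b + r_b² m₁ and β(r_a, r_b) = r_a⁻² n₂ − 2 d₂ (r_a r_b)⁻¹ + r_b⁻² m₂. Then both partial derivatives of α + β vanish at (r_a, r_b) = (1, 1) if and only if n₁ − n₂ = d₁ − d₂ and m₁ − m₂ = d₁ − d₂; moreover, in that case α(1,1) = β(1,1). -/

import Mathlib

lemma key_hasDerivAt (a b c d e f : ℝ) :
    HasDerivAt (fun x : ℝ => x^2 * a - 2 * b * x + c + (x⁻¹^2 * d - 2 * e * x⁻¹ + f))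
      (2*a - 2*b - 2*d + 2*e) 1 := by
  have hx : (1:ℝ) ≠ 0 := one_ne_zero
  have hinv : HasDerivAt (fun x : ℝ => x⁻¹) (-1) 1 := by
    simpa using hasDerivAt_inv hx
  have h1 : HasDerivAt (fun x : ℝ => x^2 * a) (2*a) 1 := by
    simpa using (hasDerivAt_pow 2 (1:ℝ)).mul_const a
  have h2 : HasDerivAt (fun x : ℝ => 2 * b * x) (2*b) 1 := by
    simpa using (hasDerivAt_id (1:ℝ)).const_mul (2*b)
  have h3 : HasDerivAt (fun x : ℝ => x⁻¹^2 * d) (-(2*d)) 1 := by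
    have := ((hinv.pow 2).mul_const d)
    simpa using this
  have h4 : HasDerivAt (fun x : ℝ => 2 * e * x⁻¹) (-(2*e)) 1 := by
    simpa using hinv.const_mul (2*e)
  have := (((h1.sub h2).add_const c).add (((h3.sub h4).add_const f))
  )
  refine this.congr_deriv ?_
  ring

/-- the identity is a critical point of the local squeezing optimization
iff the covariance matrix is in standard form III. -/
theorem critical_point_iff_standard_form_III (n₁ n₂ m₁ m₂ d₁ d₂ : ℝ)
    (hn₁ : 0 < n₁) (hn₂ : 0 < n₂) (hm₁ : 0 < m₁) (hm₂ : 0 < m₂)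
    (hd₁ : 0 < d₁) (hd₂ : 0 < d₂)
    (α : ℝ → ℝ → ℝ) (β : ℝ → ℝ → ℝ)
    (hα : ∀ ra rb, α ra rb = ra^2 * n₁ - 2 * d₁ * ra * rb + rb^2 * m₁)
    (hβ : ∀ ra rb, β ra rb = ra⁻¹^2 * n₂ - 2 * d₂ * (ra * rb)⁻¹ + rb⁻¹^2 * m₂) :
    ((deriv (fun ra => α ra 1 + β ra 1) 1 = 0 ∧
      deriv (fun rb => α 1 rb + β 1 rb) 1 = 0) ↔
      (n₁ - n₂ = d₁ - d₂ ∧ m₁ - m₂ = d₁ - d₂)) ∧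
    ((n₁ - n₂ = d₁ - d₂ ∧ m₁ - m₂ = d₁ - d₂) → α 1 1 = β 1 1) := by
  have h1 : deriv (fun ra => α ra 1 + β ra 1) 1 = 2*n₁ - 2*d₁ - 2*n₂ + 2*d₂ := by
    have : (fun ra => α ra 1 + β ra 1) =
        (fun x : ℝ => x^2 * n₁ - 2 * d₁ * x + m₁ + (x⁻¹^2 * n₂ - 2 * d₂ * x⁻¹ + m₂)) := by
      funext x; rw [hα, hβ]; ring_nf
    rw [this, (key_hasDerivAt n₁ d₁ m₁ n₂ d₂ m₂).deriv]
  have h2 : deriv (fun rb => α 1 rb + β 1 rb) 1 = 2*m₁ - 2*d₁ - 2*m₂ + 2*d₂ := by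
    have : (fun rb => α 1 rb + β 1 rb) =
        (fun x : ℝ => x^2 * m₁ - 2 * d₁ * x + n₁ + (x⁻¹^2 * m₂ - 2 * d₂ * x⁻¹ + n₂)) := by
      funext x; rw [hα, hβ]; ring_nf
    rw [this, (key_hasDerivAt m₁ d₁ n₁ m₂ d₂ n₂).deriv]
  constructor
  · rw [h1, h2]; constructor
    · rintro ⟨e1, e2⟩; constructor <;> linarith
    · rintro ⟨e1, e2⟩; constructor <;> linarith
  · rintro ⟨e1, e2⟩; rw [hα, hβ]; norm_num; linarith
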